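/- (Anisotropic data can help, target-averaged, noiseless.) In the setting of the target-averaged ridgeless learning curve with no label noise (η = 0), suppose the limiting spectral distribution of Σ̃₀ has finite mean E[σ̃₀]. Then: ε̄ ≤ (1 + Σ_{ℓ=1}^{L} (1−μ_ℓ)/μ_ℓ)(1 − 1/α₀) E[σ̃₀] if α₀ > 1 and α_min > 1; ε̄ ≤ ((1 − α_min/α₀)/(1−α_min)) E[σ̃₀] if α_min < 1 and α_min < α₀; and ε̄ = 0 if α₀ < 1 and α₀ < α_min. That is, ε̄ for a given Σ̃₀ is bounded above by the generalization error for the flat spectrum Σ̃₀ = E[σ̃₀] I. -/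

import Mathlib

open MeasureTheory

lemma aux_int_bdd (ν : Measure ℝ) [IsProbabilityMeasure ν] {g : ℝ → ℝ}
    (hg : Measurable g) (hb : ∀ᵐ x ∂ν, ‖g x‖ ≤ 1) : Integrable g ν :=
  (integrable_const 1).mono' hg.aestronglyMeasurable hb

lemma aux_key (ν : Measure ℝ) [IsProbabilityMeasure ν] (hpos : ∀ᵐ σ ∂ν, 0 < σ)
    (hmom : Integrable (fun σ : ℝ => σ) ν) (κ : ℝ) (hκ : 0 ≤ κ) :
    κ * ∫ σ, σ / (κ + σ) ∂ν ≤ (1 - ∫ σ, σ / (κ + σ) ∂ν) * ∫ σ, σ ∂ν := by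
  set m : ℝ := ∫ σ, σ ∂ν with hm_def
  have hgmeas : Measurable fun x : ℝ => x / (κ + x) :=
    measurable_id.div (measurable_const.add measurable_id)
  have hbdd : ∀ᵐ x ∂ν, ‖x / (κ + x)‖ ≤ 1 := by
    filter_upwards [hpos] with x hx
    have h1 : 0 < κ + x := by linarith
    rw [Real.norm_eq_abs, abs_le]
    constructor
    · have : 0 ≤ x / (κ + x) := div_nonneg hx.le h1.le
      linarith
    · rw [div_le_one h1]; linarith
  have hintg : Integrable (fun x : ℝ => x / (κ + x)) ν := aux_int_bdd ν hgmeas hbdd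
  have hm : 0 < m := by
    rw [hm_def, integral_pos_iff_support_of_nonneg_ae
      (by filter_upwards [hpos] with x hx using hx.le) hmom]
    have hc : ν (Function.support fun x : ℝ => x)ᶜ = 0 := by
      refine measure_mono_null ?_ (ae_iff.mp hpos)
      intro x hx
      simp only [Function.mem_support, Set.mem_compl_iff, not_not] at hx
      simp [hx]
    by_contra h
    push_neg at h
    have h0 : ν (Function.support fun x : ℝ => x) = 0 := le_antisymm h zero_le
    have := measure_univ (μ := ν)
    have hle : ν Set.univ ≤ ν (Function.support fun x : ℝ => x) +
        ν (Function.support fun x : ℝ => x)ᶜ := by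
      rw [← Set.union_compl_self (Function.support fun x : ℝ => x)] at this ⊢
      exact measure_union_le _ _
    rw [h0, hc] at hle
    simp [this] at hle
  have hkm : 0 < κ + m := by linarith
  -- tangent line bound
  have hptwise : ∀ᵐ x ∂ν, x / (κ + x) ≤ m / (κ + m) + κ / (κ + m) ^ 2 * (x - m) := by
    filter_upwards [hpos] with x hx
    have h1 : 0 < κ + x := by linarith
    rw [div_le_iff₀ h1, ← sub_nonneg]
    have hkey : (m / (κ + m) + κ / (κ + m) ^ 2 * (x - m)) * (κ + x) - x
        = κ * (x - m) ^ 2 / (κ + m) ^ 2 := by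
      field_simp
      ring
    rw [hkey]
    positivity
  have hsub : Integrable (fun x : ℝ => x - m) ν := hmom.sub (integrable_const m)
  have hsub2 : Integrable (fun x : ℝ => κ / (κ + m) ^ 2 * (x - m)) ν := hsub.const_mul _
  have hintlin : Integrable (fun x : ℝ => m / (κ + m) + κ / (κ + m) ^ 2 * (x - m)) ν :=
    (integrable_const _).add hsub2
  have hc_le : (∫ σ, σ / (κ + σ) ∂ν) ≤ m / (κ + m) := by
    calc (∫ σ, σ / (κ + σ) ∂ν)
        ≤ ∫ x, (m / (κ + m) + κ / (κ + m) ^ 2 * (x - m)) ∂ν :=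
          integral_mono_ae hintg hintlin hptwise
      _ = m / (κ + m) := by
          rw [integral_add (integrable_const _) hsub2,
            integral_const, integral_const_mul, integral_sub hmom (integrable_const m),
            integral_const]
          simp [hm_def]
  set c : ℝ := ∫ σ, σ / (κ + σ) ∂ν
  have h1 : κ * c ≤ κ * (m / (κ + m)) := mul_le_mul_of_nonneg_left hc_le hκ
  have h2 : (1 - m / (κ + m)) * m ≤ (1 - c) * m :=
    mul_le_mul_of_nonneg_right (by linarith) hm.le
  have h3 : κ * (m / (κ + m)) = (1 - m / (κ + m)) * m := by
    field_simp
    ring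
  linarith

lemma aux_mu_nonneg (ν : Measure ℝ) [IsProbabilityMeasure ν] (hpos : ∀ᵐ σ ∂ν, 0 < σ)
    {κ a : ℝ} (hκ : 0 < κ) (ha : 1 < a) (hint : ∫ σ, σ / (κ + σ) ∂ν = 1 / a) :
    0 ≤ (1 - (1 - a * ∫ σ, (σ / (κ + σ)) ^ 2 ∂ν)) / (1 - a * ∫ σ, (σ / (κ + σ)) ^ 2 ∂ν) := by
  have ha0 : 0 < a := by linarith
  have hgmeas : Measurable fun x : ℝ => x / (κ + x) :=
    measurable_id.div (measurable_const.add measurable_id)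
  have hbdd : ∀ᵐ x ∂ν, 0 ≤ x / (κ + x) ∧ x / (κ + x) ≤ 1 := by
    filter_upwards [hpos] with x hx
    have h1 : 0 < κ + x := by linarith
    exact ⟨div_nonneg hx.le h1.le, by rw [div_le_one h1]; linarith⟩
  have hintg : Integrable (fun x : ℝ => x / (κ + x)) ν := by
    refine aux_int_bdd ν hgmeas ?_
    filter_upwards [hbdd] with x ⟨h0, h1⟩
    rw [Real.norm_eq_abs, abs_le]; constructor <;> linarith
  have hintg2 : Integrable (fun x : ℝ => (x / (κ + x)) ^ 2) ν := by
    refine aux_int_bdd ν (hgmeas.pow_const 2) ?_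
    filter_upwards [hbdd] with x ⟨h0, h1⟩
    rw [Real.norm_eq_abs, abs_le]
    constructor
    · nlinarith
    · nlinarith
  have hsq_nonneg : 0 ≤ ∫ σ, (σ / (κ + σ)) ^ 2 ∂ν :=
    integral_nonneg fun x => sq_nonneg _
  have hsq_le : (∫ σ, (σ / (κ + σ)) ^ 2 ∂ν) ≤ 1 / a := by
    rw [← hint]
    refine integral_mono_ae hintg2 hintg ?_
    filter_upwards [hbdd] with x ⟨h0, h1⟩
    nlinarith
  refine div_nonneg ?_ ?_
  · nlinarith
  · have : a * ∫ σ, (σ / (κ + σ)) ^ 2 ∂ν ≤ a * (1/a) := by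
      exact mul_le_mul_of_nonneg_left hsq_le ha0.le
    rw [mul_one_div_cancel (by linarith)] at this
    linarith

/-- Lemma 3, anisotropic data can help on average, noiseless case.  In the
setting of the target-averaged ridgeless learning curve with no label noise (`η = 0`), if the
limiting spectral distribution `ν₀` of the data covariance `Σ̃₀` has finite mean `E[σ̃₀]`,
then the target-averaged error `ε̄` is bounded above by the generalization error obtained for
the flat spectrum `Σ̃₀ = E[σ̃₀] I`:
`ε̄ ≤ (1 + Σ_{ℓ=1}^L (1−μ_ℓ)/μ_ℓ)(1 − 1/α₀) E[σ̃₀]` if `α₀ > 1 ∧ αmin > 1`;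
`ε̄ ≤ ((1 − αmin/α₀)/(1−αmin)) E[σ̃₀]` if `αmin < 1 ∧ αmin < α₀`; and `ε̄ = 0` if
`α₀ < 1 ∧ α₀ < αmin`. -/
theorem anisotropic_data_beneficial_target_averaged
    (L : ℕ) (hL : 1 ≤ L) (α : ℕ → ℝ) (αmin : ℝ)
    (hαpos : ∀ ℓ ≤ L, 0 < α ℓ)
    -- αmin = min{α₁, …, α_L}
    (hαmin : IsLeast {x | ∃ ℓ, 1 ≤ ℓ ∧ ℓ ≤ L ∧ x = α ℓ} αmin)
    -- limiting spectral distributions of the covariances Σ̃₀, Σ̃₁, …, Σ̃_L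
    (ν : ℕ → Measure ℝ) (hprob : ∀ ℓ ≤ L, IsProbabilityMeasure (ν ℓ))
    (hpos : ∀ ℓ ≤ L, ∀ᵐ σ ∂ν ℓ, 0 < σ)
    -- the data spectrum has finite mean
    (hmom : Integrable (fun σ : ℝ => σ) (ν 0))
    -- self-consistent quantities (in the regimes where they are defined)
    (κ μ : ℕ → ℝ) (κmin : ℝ)
    (hκ : ∀ ℓ ≤ L, 1 < α ℓ → 0 < κ ℓ ∧ ∫ σ, σ / (κ ℓ + σ) ∂ν ℓ = 1 / α ℓ)
    (hμ : ∀ ℓ ≤ L, 1 < α ℓ → μ ℓ = 1 - α ℓ * ∫ σ, (σ / (κ ℓ + σ)) ^ 2 ∂ν ℓ)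
    (hκmin : αmin < α 0 → 0 ≤ κmin ∧ ∫ σ, σ / (κmin + σ) ∂ν 0 = αmin / α 0)
    -- the target-averaged ridgeless generalization error with η = 0, regime by regime
    (εbar : ℝ)
    (hεbar1 : 1 < α 0 → 1 < αmin →
      εbar = (1 + ∑ ℓ ∈ Finset.Icc 1 L, (1 - μ ℓ) / μ ℓ) * (κ 0 / α 0))
    (hεbar2 : αmin < 1 → αmin < α 0 →
      εbar = αmin * κmin / α 0 / (1 - αmin))
    (hεbar3 : α 0 < 1 → α 0 < αmin → εbar = 0) :
    (1 < α 0 → 1 < αmin →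
      εbar ≤ (1 + ∑ ℓ ∈ Finset.Icc 1 L, (1 - μ ℓ) / μ ℓ) * (1 - 1 / α 0) *
        ∫ σ, σ ∂ν 0) ∧
    (αmin < 1 → αmin < α 0 →
      εbar ≤ (1 - αmin / α 0) / (1 - αmin) * ∫ σ, σ ∂ν 0) ∧
    (α 0 < 1 → α 0 < αmin → εbar = 0) := by
  haveI : IsProbabilityMeasure (ν 0) := hprob 0 (Nat.zero_le L)
  have hα0 : 0 < α 0 := hαpos 0 (Nat.zero_le L)
  set m : ℝ := ∫ σ, σ ∂ν 0 with hm_def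
  refine ⟨?_, ?_, fun h1 h2 => hεbar3 h1 h2⟩
  · -- first regime
    intro hα01 hαmin1
    have hκ0 := hκ 0 (Nat.zero_le L) hα01
    have hkey := aux_key (ν 0) (hpos 0 (Nat.zero_le L)) hmom (κ 0) hκ0.1.le
    rw [hκ0.2] at hkey
    -- κ 0 * (1/α 0) ≤ (1 - 1/α 0) * m
    have hS : 0 ≤ ∑ ℓ ∈ Finset.Icc 1 L, (1 - μ ℓ) / μ ℓ := by
      refine Finset.sum_nonneg fun ℓ hℓ => ?_
      rw [Finset.mem_Icc] at hℓ
      have hαℓ : 1 < α ℓ := lt_of_lt_of_le hαmin1 (hαmin.2 ⟨ℓ, hℓ.1, hℓ.2, rfl⟩)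
      have hκℓ := hκ ℓ hℓ.2 hαℓ
      haveI : IsProbabilityMeasure (ν ℓ) := hprob ℓ hℓ.2
      have := aux_mu_nonneg (ν ℓ) (hpos ℓ hℓ.2) hκℓ.1 hαℓ hκℓ.2
      rw [hμ ℓ hℓ.2 hαℓ]
      exact this
    rw [hεbar1 hα01 hαmin1]
    have h1S : (0:ℝ) ≤ 1 + ∑ ℓ ∈ Finset.Icc 1 L, (1 - μ ℓ) / μ ℓ := by linarith
    have hq : κ 0 / α 0 ≤ (1 - 1 / α 0) * m := by
      have : κ 0 / α 0 = κ 0 * (1 / α 0) := by ring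
      rw [this]; exact hkey
    calc (1 + ∑ ℓ ∈ Finset.Icc 1 L, (1 - μ ℓ) / μ ℓ) * (κ 0 / α 0)
        ≤ (1 + ∑ ℓ ∈ Finset.Icc 1 L, (1 - μ ℓ) / μ ℓ) * ((1 - 1 / α 0) * m) :=
          mul_le_mul_of_nonneg_left hq h1S
      _ = (1 + ∑ ℓ ∈ Finset.Icc 1 L, (1 - μ ℓ) / μ ℓ) * (1 - 1 / α 0) * m := by ring
  · -- second regime
    intro hαmin1 hαminα0
    have hκm := hκmin hαminα0
    have hkey := aux_key (ν 0) (hpos 0 (Nat.zero_le L)) hmom κmin hκm.1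
    rw [hκm.2] at hkey
    rw [hεbar2 hαmin1 hαminα0]
    have h1α : 0 < 1 - αmin := by linarith
    rw [div_le_iff₀ h1α] at *
    have : (1 - αmin / α 0) / (1 - αmin) * m * (1 - αmin)
        = (1 - αmin / α 0) * m := by field_simp
    rw [this]
    have : αmin * κmin / α 0 = κmin * (αmin / α 0) := by ring
    rw [this]
    linarith
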